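/- If A is a bigraded cdga as above with A_{2k}^{k-1} = 0 for all k, then the collection K^k = ker(d : A_{2k}^k → A_{2k}^{k+1}) is a subalgebra of A closed under the product, carries a cdga structure with zero differential, and the inclusion K → A is a morphism of cdga's. -/
import Mathlib


/-- let `A` be a cdga over ℚ with a weight grading `𝒜 q k`
(weight `q`, cohomological degree `k`) compatible with the product and the
differential, and such that `𝒜 (2k) (k-1) = 0` for all `k`.  Then the
collection `K^k = ker(D : 𝒜 (2k) k → 𝒜 (2k) (k+1))` is closed under the
product (landing in `K^{k+k'}`), carries a cdga structure with zero
differential (the differential of `A` vanishes on `K` by definition), and the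
inclusion `K → A` is a morphism of cdga's. -/
theorem stmt_1
    (A : Type) [Ring A] [Algebra ℚ A]
    (𝒜 : ℤ → ℤ → Submodule ℚ A)
    (hmul : ∀ (q q' k k' : ℤ), ∀ x ∈ 𝒜 q k, ∀ y ∈ 𝒜 q' k',
      x * y ∈ 𝒜 (q + q') (k + k'))
    (hcomm : ∀ (q q' k k' : ℤ), ∀ x ∈ 𝒜 q k, ∀ y ∈ 𝒜 q' k',
      x * y = ((-1 : ℚ) ^ (k * k')) • (y * x))
    (D : A →ₗ[ℚ] A)
    (hD : ∀ (q k : ℤ), ∀ x ∈ 𝒜 q k, D x ∈ 𝒜 q (k + 1))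
    (hDD : ∀ x : A, D (D x) = 0)
    (hleib : ∀ (q q' k k' : ℤ), ∀ x ∈ 𝒜 q k, ∀ y ∈ 𝒜 q' k',
      D (x * y) = D x * y + ((-1 : ℚ) ^ k) • (x * D y))
    (hvanish : ∀ k : ℤ, 𝒜 (2 * k) (k - 1) = ⊥) :
    ∀ (k k' : ℤ), ∀ x ∈ 𝒜 (2 * k) k, ∀ y ∈ 𝒜 (2 * k') k',
      D x = 0 → D y = 0 →
        x * y ∈ 𝒜 (2 * (k + k')) (k + k') ∧ D (x * y) = 0 := by
  intro k k' x hx y hy hdx hdy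
  constructor
  · have := hmul _ _ _ _ x hx y hy
    have h : 2 * k + 2 * k' = 2 * (k + k') := by ring
    rwa [h] at this
  · rw [hleib _ _ _ _ x hx y hy, hdx, hdy, zero_mul, mul_zero, smul_zero, add_zero]
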